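/- Let p be an odd prime and let ρ : (ZMod p)ˣ →* Equiv.Perm {a : ZMod p // a ≠ 0} be the group homomorphism sending a unit u to the permutation a ↦ u·a of the nonzero elements of ZMod p. Then the centralizer of ρ.range in Equiv.Perm {a : ZMod p // a ≠ 0} equals ρ.range itself; in particular this centralizer is a cyclic group of order p − 1. -/

import Mathlib

/-- For an odd prime `p`, the centralizer in the symmetric group on the
nonzero elements of `ZMod p` of the range of the multiplication action
`ρ : (ZMod p)ˣ →* Equiv.Perm {a : ZMod p // a ≠ 0}` equals `ρ.range`; in particular
it is cyclic of order `p - 1`. -/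
theorem stmt_0 (p : ℕ) [Fact p.Prime] (hodd : Odd p)
    (ρ : (ZMod p)ˣ →* Equiv.Perm {a : ZMod p // a ≠ 0})
    (hρ : ∀ (u : (ZMod p)ˣ) (a : {a : ZMod p // a ≠ 0}),
      ((ρ u a : {a : ZMod p // a ≠ 0}) : ZMod p) = (u : ZMod p) * (a : ZMod p)) :
    Subgroup.centralizer (ρ.range : Set (Equiv.Perm {a : ZMod p // a ≠ 0})) = ρ.range ∧
    IsCyclic ↥(Subgroup.centralizer (ρ.range : Set (Equiv.Perm {a : ZMod p // a ≠ 0}))) ∧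
    Nat.card ↥(Subgroup.centralizer (ρ.range : Set (Equiv.Perm {a : ZMod p // a ≠ 0}))) = p - 1 := by
  have h1 : (1 : ZMod p) ≠ 0 := one_ne_zero
  have hinj : Function.Injective ρ := by
    intro u v huv
    have h := congrArg (fun σ : Equiv.Perm {a : ZMod p // a ≠ 0} =>
      ((σ ⟨1, h1⟩ : {a : ZMod p // a ≠ 0}) : ZMod p)) huv
    simp only [hρ, mul_one] at h
    exact Units.ext h
  have hmain : Subgroup.centralizer (ρ.range : Set (Equiv.Perm {a : ZMod p // a ≠ 0}))
      = ρ.range := by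
    apply le_antisymm
    · intro σ hσ
      rw [Subgroup.mem_centralizer_iff] at hσ
      set b : {a : ZMod p // a ≠ 0} := σ ⟨1, h1⟩ with hbdef
      refine ⟨Units.mk0 (b : ZMod p) b.2, ?_⟩
      ext a
      have ha : (a : ZMod p) ≠ 0 := a.2
      have hcomm := hσ (ρ (Units.mk0 (a : ZMod p) ha)) ⟨Units.mk0 (a : ZMod p) ha, rfl⟩
      -- hcomm : ρ v * σ = σ * ρ v
      have h2 : ρ (Units.mk0 (a : ZMod p) ha) ⟨1, h1⟩ = a := by
        apply Subtype.ext
        rw [hρ]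
        simp
      have h3 : (ρ (Units.mk0 (a : ZMod p) ha)) (σ ⟨1, h1⟩) = σ a := by
        have := congrArg (fun π : Equiv.Perm {a : ZMod p // a ≠ 0} => π ⟨1, h1⟩) hcomm
        simpa [Equiv.Perm.mul_apply, h2] using this
      rw [hρ]
      have : ((σ a : {a : ZMod p // a ≠ 0}) : ZMod p) = (a : ZMod p) * (b : ZMod p) := by
        rw [← h3, hρ]
        simp [hbdef]
      rw [this]
      simp [mul_comm]
    · intro x hx
      rw [Subgroup.mem_centralizer_iff]
      rintro y ⟨v, rfl⟩
      obtain ⟨u, rfl⟩ := hx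
      rw [← map_mul, ← map_mul, mul_comm]
  refine ⟨hmain, ?_, ?_⟩
  · rw [hmain]
    exact isCyclic_of_surjective (MonoidHom.ofInjective hinj)
      (MulEquiv.surjective _)
  · rw [hmain, ← Nat.card_congr (MonoidHom.ofInjective hinj).toEquiv,
      Nat.card_eq_fintype_card, ZMod.card_units]
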